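/- Let ρ : ℝⁿ → ℝ be C², and suppose at a boundary point ζ (with ρ(ζ)=0) the Hessian of ρ is positive definite with smallest eigenvalue ≥ c > 0. Then for every z with ρ(z) ≤ 0, writing L(z) = Σⱼ ∂ρ/∂tⱼ(ζ)(zⱼ − ζⱼ) for the linear part, there exist C' > 0 and δ > 0 (depending on ρ, c) such that |L(z)| ≥ C'|z − ζ|² whenever |z − ζ| < δ and L(z) ≤ 0. -/

import Mathlib

set_option maxHeartbeats 1000000 in
theorem stmt_14 (n : ℕ) (ρ : EuclideanSpace ℝ (Fin n) → ℝ)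
    (hρ : ContDiff ℝ 2 ρ)
    (ζ : EuclideanSpace ℝ (Fin n)) (hζ : ρ ζ = 0)
    (c : ℝ) (hc : 0 < c)
    (hHess : ∀ v : EuclideanSpace ℝ (Fin n),
      c * ‖v‖ ^ 2 ≤ iteratedFDeriv ℝ 2 ρ ζ ![v, v]) :
    ∃ C' : ℝ, 0 < C' ∧ ∃ δ : ℝ, 0 < δ ∧
      ∀ z : EuclideanSpace ℝ (Fin n), ρ z ≤ 0 → ‖z - ζ‖ < δ →
        fderiv ℝ ρ ζ (z - ζ) ≤ 0 →
        C' * ‖z - ζ‖ ^ 2 ≤ |fderiv ℝ ρ ζ (z - ζ)| := by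
  set B : EuclideanSpace ℝ (Fin n) →
      EuclideanSpace ℝ (Fin n) →L[ℝ] EuclideanSpace ℝ (Fin n) →L[ℝ] ℝ :=
    fderiv ℝ (fderiv ℝ ρ) with hB
  have hρ1 : ContDiff ℝ 1 (fderiv ℝ ρ) := hρ.fderiv_right (by norm_num)
  have hBcont : Continuous B := ((hρ1.fderiv_right (m := 0) (by norm_num)).continuous)
  have hBζ : ∀ v : EuclideanSpace ℝ (Fin n), c * ‖v‖ ^ 2 ≤ B ζ v v := by
    intro v
    have := hHess v
    rwa [iteratedFDeriv_two_apply] at this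
  obtain ⟨δ, hδ, hδB⟩ : ∃ δ > 0, ∀ x, ‖x - ζ‖ < δ → ‖B x - B ζ‖ < c / 2 := by
    have hc2 : Continuous (fun x => ‖B x - B ζ‖) := by
      exact (hBcont.dist continuous_const).congr fun x => dist_eq_norm (B x) (B ζ)
    have htend : Filter.Tendsto (fun x => ‖B x - B ζ‖) (nhds ζ) (nhds 0) :=
      hc2.tendsto' ζ 0 (by
        exact (dist_eq_norm (B ζ) (B ζ)).symm.trans (dist_self _))
    have h0 : ∀ᶠ x in nhds ζ, ‖B x - B ζ‖ < c / 2 :=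
      htend.eventually_lt_const (by positivity)
    obtain ⟨ε, hε, h⟩ := Metric.eventually_nhds_iff.mp h0
    refine ⟨ε, hε, fun x hx => ?_⟩
    exact h (show dist x ζ < ε by rwa [dist_eq_norm])
  refine ⟨c / 4, by positivity, δ, hδ, fun z hz hzδ hL => ?_⟩
  set v := z - ζ with hv
  set L : ℝ := fderiv ℝ ρ ζ v with hLdef
  have hBlow : ∀ t : ℝ, t ∈ Set.Icc (0:ℝ) 1 → c / 2 * ‖v‖ ^ 2 ≤ B (ζ + t • v) v v := by
    intro t ht
    have hnorm : ‖ζ + t • v - ζ‖ < δ := by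
      rw [add_sub_cancel_left, norm_smul]
      calc ‖t‖ * ‖v‖ ≤ 1 * ‖v‖ := by
            apply mul_le_mul_of_nonneg_right _ (norm_nonneg _)
            rw [Real.norm_eq_abs, abs_le]; constructor <;> linarith [ht.1, ht.2]
        _ = ‖v‖ := one_mul _
        _ < δ := hzδ
    have hd := hδB _ hnorm
    have h1 : |B (ζ + t • v) v v - B ζ v v| ≤ c / 2 * ‖v‖ ^ 2 := by
      have hb : ‖(B (ζ + t • v) - B ζ) v v‖ ≤ ‖B (ζ + t • v) - B ζ‖ * ‖v‖ * ‖v‖ :=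
        ((B (ζ + t • v) - B ζ).le_opNorm₂ v v)
      simp only [ContinuousLinearMap.sub_apply] at hb
      calc |B (ζ + t • v) v v - B ζ v v| = ‖B (ζ + t • v) v v - B ζ v v‖ := (Real.norm_eq_abs _).symm
        _ ≤ ‖B (ζ + t • v) - B ζ‖ * ‖v‖ * ‖v‖ := hb
        _ ≤ (c / 2) * ‖v‖ * ‖v‖ := by
            apply mul_le_mul_of_nonneg_right _ (norm_nonneg _)
            exact mul_le_mul_of_nonneg_right hd.le (norm_nonneg _)
        _ = c / 2 * ‖v‖ ^ 2 := by ring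
    have h2 := hBζ v
    have h3 := (abs_le.mp h1).1
    linarith
  have hline : ∀ t : ℝ, HasDerivAt (fun s : ℝ => ζ + s • v) v t := by
    intro t
    simpa using ((hasDerivAt_id t).smul_const v).const_add ζ
  have hg : ∀ t : ℝ, HasDerivAt (fun s : ℝ => ρ (ζ + s • v)) (fderiv ℝ ρ (ζ + t • v) v) t := by
    intro t
    exact ((hρ.differentiable (by norm_num) (ζ + t • v)).hasFDerivAt).comp_hasDerivAt t (hline t)
  have hg1 : ∀ t : ℝ, HasDerivAt (fun s : ℝ => fderiv ℝ ρ (ζ + s • v) v)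
      (B (ζ + t • v) v v) t := by
    intro t
    have hBd : HasDerivAt (fun s : ℝ => fderiv ℝ ρ (ζ + s • v)) (B (ζ + t • v) v) t :=
      ((hρ1.differentiable one_ne_zero (ζ + t • v)).hasFDerivAt).comp_hasDerivAt t (hline t)
    have := hBd.clm_apply (hasDerivAt_const t v)
    simpa using this
  set K : ℝ := c / 2 * ‖v‖ ^ 2 with hK
  have hh1deriv : ∀ t : ℝ, HasDerivAt
      (fun s : ℝ => fderiv ℝ ρ (ζ + s • v) v - L - K * s) (B (ζ + t • v) v v - K) t := by
    intro t
    have := ((hg1 t).sub (hasDerivAt_const t L)).sub ((hasDerivAt_id t).const_mul K)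
    simp only [mul_one, sub_zero] at this
    exact this
  have hmono1 : MonotoneOn (fun s : ℝ => fderiv ℝ ρ (ζ + s • v) v - L - K * s)
      (Set.Icc 0 1) := by
    apply monotoneOn_of_deriv_nonneg (convex_Icc 0 1)
    · exact Continuous.continuousOn
        (continuous_iff_continuousAt.mpr fun t => (hh1deriv t).differentiableAt.continuousAt)
    · intro t _
      exact ((hh1deriv t).differentiableAt).differentiableWithinAt
    · intro t ht
      rw [(hh1deriv t).deriv]
      rw [interior_Icc] at ht
      have := hBlow t ⟨ht.1.le, ht.2.le⟩
      simp only [hK] at *; linarith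
  have hh1nonneg : ∀ t ∈ Set.Icc (0:ℝ) 1, 0 ≤ fderiv ℝ ρ (ζ + t • v) v - L - K * t := by
    intro t ht
    have h0 : (fun s : ℝ => fderiv ℝ ρ (ζ + s • v) v - L - K * s) 0 = 0 := by
      simp [hLdef]
    have := hmono1 (Set.left_mem_Icc.mpr zero_le_one) ht ht.1
    rw [h0] at this
    exact this
  have hhderiv : ∀ t : ℝ, HasDerivAt
      (fun s : ℝ => ρ (ζ + s • v) - L * s - K / 2 * s ^ 2)
      (fderiv ℝ ρ (ζ + t • v) v - L - K * t) t := by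
    intro t
    have h2 : HasDerivAt (fun s : ℝ => K / 2 * s ^ 2) (K * t) t := by
      have := (hasDerivAt_pow 2 t).const_mul (K / 2)
      simpa using this.congr_deriv (by ring)
    have := ((hg t).sub ((hasDerivAt_id t).const_mul L)).sub h2
    simp only [mul_one] at this
    exact this
  have hmono2 : MonotoneOn (fun s : ℝ => ρ (ζ + s • v) - L * s - K / 2 * s ^ 2)
      (Set.Icc 0 1) := by
    apply monotoneOn_of_deriv_nonneg (convex_Icc 0 1)
    · exact Continuous.continuousOn
        (continuous_iff_continuousAt.mpr fun t => (hhderiv t).differentiableAt.continuousAt)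
    · intro t _
      exact ((hhderiv t).differentiableAt).differentiableWithinAt
    · intro t ht
      rw [(hhderiv t).deriv]
      rw [interior_Icc] at ht
      exact hh1nonneg t ⟨ht.1.le, ht.2.le⟩
  have key := hmono2 (Set.left_mem_Icc.mpr zero_le_one) (Set.right_mem_Icc.mpr zero_le_one)
    zero_le_one
  simp only [zero_pow, mul_zero, mul_one, one_pow, sub_zero, zero_smul, add_zero,
    one_smul] at key
  have hz1 : ζ + v = z := by rw [hv]; abel
  rw [hζ, hz1] at key
  -- key : 0 ≤ ρ z - L - K / 2  (roughly)
  have hfin : L ≤ -(c / 4) * ‖v‖ ^ 2 := by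
    simp only [hK] at key
    nlinarith
  rw [abs_of_nonpos hL]
  nlinarith
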